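/- Applying the measurement operator I ⊗ I ⊗ M_0^B (with M_0^B as in the paper) to |ψ⟩ = (1/√3)∑_l |l⟩⊗|ψ_l⟩ and renormalizing yields (1/√3)∑_l |l⟩⊗|ψ_l^{(0)}⟩, where |ψ_0^{(0)}⟩ = √(2/11)|Φ_2⟩ ⊕ √(9/11)|Ψ⟩, |ψ_1^{(0)}⟩ = √(2/11)γ₁(X_2⊗I)|Φ_2⟩ ⊕ √(9/11)(X_9³⊗I)|Ψ⟩, |ψ_2^{(0)}⟩ = √(2/11)γ₂(Z_2⊗I)|Φ_2⟩ ⊕ √(9/11)(X_9⁶⊗I)|Ψ⟩, with |Ψ⟩ = (1/√3)(|0⟩⊗|0⟩+|1⟩⊗|1⟩+|2⟩⊗|2⟩) ∈ ℂ⁹⊗ℂ⁹. -/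

import Mathlib

open Complex

noncomputable def Xmat (k : ℕ) : Matrix (Fin k) (Fin k) ℂ :=
  fun i j => if (i : ℕ) = ((j : ℕ) + 1) % k then 1 else 0

noncomputable def Zmat (k : ℕ) : Matrix (Fin k) (Fin k) ℂ :=
  Matrix.diagonal fun l => Complex.exp (2 * Real.pi * Complex.I * (l : ℕ) / (k : ℕ))

noncomputable def PhiME (k : ℕ) : EuclideanSpace ℂ (Fin k × Fin k) :=
  WithLp.toLp 2 fun p => if p.1 = p.2 then ((1 / Real.sqrt k : ℝ) : ℂ) else 0

/-- `|Ψ⟩ = (1/√3)(|0⟩⊗|0⟩+|1⟩⊗|1⟩+|2⟩⊗|2⟩) ∈ ℂ⁹ ⊗ ℂ⁹`. -/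
noncomputable def PsiNine : EuclideanSpace ℂ (Fin 9 × Fin 9) :=
  WithLp.toLp 2 fun p => if p.1 = p.2 ∧ (p.1 : ℕ) < 3 then ((1 / Real.sqrt 3 : ℝ) : ℂ) else 0

noncomputable def opL {k : ℕ} (U : Matrix (Fin k) (Fin k) ℂ)
    (v : EuclideanSpace ℂ (Fin k × Fin k)) : EuclideanSpace ℂ (Fin k × Fin k) :=
  WithLp.toLp 2 fun p => ∑ i, U p.1 i * v (i, p.2)

noncomputable def lift2 (v : EuclideanSpace ℂ (Fin 2 × Fin 2)) :
    EuclideanSpace ℂ (Fin 11 × Fin 11) :=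
  WithLp.toLp 2 fun p => if h : (p.1 : ℕ) < 2 ∧ (p.2 : ℕ) < 2 then v (⟨p.1, h.1⟩, ⟨p.2, h.2⟩) else 0

noncomputable def lift9 (v : EuclideanSpace ℂ (Fin 9 × Fin 9)) :
    EuclideanSpace ℂ (Fin 11 × Fin 11) :=
  WithLp.toLp 2 fun p =>
    if h : 2 ≤ (p.1 : ℕ) ∧ 2 ≤ (p.2 : ℕ) then
      v (⟨(p.1 : ℕ) - 2, by have := p.1.isLt; omega⟩,
         ⟨(p.2 : ℕ) - 2, by have := p.2.isLt; omega⟩)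
    else 0

/-- The states `|ψ_l⟩` of Eq. (2) of the paper. -/
noncomputable def psiFam (γ₁ γ₂ : ℂ) : Fin 3 → EuclideanSpace ℂ (Fin 11 × Fin 11) :=
  ![(Real.sqrt (2 / 11) : ℂ) • lift2 (PhiME 2)
      + (Real.sqrt (9 / 11) : ℂ) • lift9 (PhiME 9),
    (Real.sqrt (2 / 11) : ℂ) • (γ₁ • lift2 (opL (Xmat 2) (PhiME 2)))
      + (Real.sqrt (9 / 11) : ℂ) • lift9 (opL (Xmat 9 ^ 3) (PhiME 9)),
    (Real.sqrt (2 / 11) : ℂ) • (γ₂ • lift2 (opL (Zmat 2) (PhiME 2)))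
      + (Real.sqrt (9 / 11) : ℂ) • lift9 (opL (Xmat 9 ^ 6) (PhiME 9))]

/-- The post-measurement states `|ψ_l^{(0)}⟩`. -/
noncomputable def psiFam0 (γ₁ γ₂ : ℂ) : Fin 3 → EuclideanSpace ℂ (Fin 11 × Fin 11) :=
  ![(Real.sqrt (2 / 11) : ℂ) • lift2 (PhiME 2)
      + (Real.sqrt (9 / 11) : ℂ) • lift9 PsiNine,
    (Real.sqrt (2 / 11) : ℂ) • (γ₁ • lift2 (opL (Xmat 2) (PhiME 2)))
      + (Real.sqrt (9 / 11) : ℂ) • lift9 (opL (Xmat 9 ^ 3) PsiNine),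
    (Real.sqrt (2 / 11) : ℂ) • (γ₂ • lift2 (opL (Zmat 2) (PhiME 2)))
      + (Real.sqrt (9 / 11) : ℂ) • lift9 (opL (Xmat 9 ^ 6) PsiNine)]

/-- `(1/√3) ∑ l, |l⟩ ⊗ |χ_l⟩ ∈ ℂ³ ⊗ (ℂ¹¹ ⊗ ℂ¹¹)`. -/
noncomputable def totalState (χ : Fin 3 → EuclideanSpace ℂ (Fin 11 × Fin 11)) :
    EuclideanSpace ℂ (Fin 3 × (Fin 11 × Fin 11)) :=
  WithLp.toLp 2 fun p => ((1 / Real.sqrt 3 : ℝ) : ℂ) * χ p.1 p.2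

/-- Diagonal entries of `M_0^B = √(1/3)(|0⟩⟨0|+|1⟩⟨1|) ⊕ (|0⟩⟨0|+|1⟩⟨1|+|2⟩⟨2|)`
on `ℂ¹¹ = ℂ² ⊕ ℂ⁹`. -/
noncomputable def M0Bdiag (i : Fin 11) : ℂ :=
  if (i : ℕ) < 2 then ((Real.sqrt (1 / 3) : ℝ) : ℂ) else if (i : ℕ) < 5 then 1 else 0

/-- Action of `I ⊗ I ⊗ M_0^B` on `ℂ³ ⊗ ℂ¹¹ ⊗ ℂ¹¹` (third tensor factor). -/
noncomputable def applyM0B (ψ : EuclideanSpace ℂ (Fin 3 × (Fin 11 × Fin 11))) :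
    EuclideanSpace ℂ (Fin 3 × (Fin 11 × Fin 11)) :=
  WithLp.toLp 2 fun p => M0Bdiag p.2.2 * ψ p


-- batch 1 lemmas
lemma opL_one {k : ℕ} (v : EuclideanSpace ℂ (Fin k × Fin k)) :
    opL (1 : Matrix (Fin k) (Fin k) ℂ) v = v := by
  ext p
  simp [opL, Matrix.one_apply, ite_mul]

lemma opL_Phi {k : ℕ} (U : Matrix (Fin k) (Fin k) ℂ) (a b : Fin k) :
    opL U (PhiME k) (a, b) = U a b * ((1 / Real.sqrt k : ℝ) : ℂ) := by
  simp [opL, PhiME, mul_ite, mul_zero]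

lemma opL_Psi (U : Matrix (Fin 9) (Fin 9) ℂ) (a b : Fin 9) :
    opL U PsiNine (a, b)
      = if (b : ℕ) < 3 then U a b * ((1 / Real.sqrt 3 : ℝ) : ℂ) else 0 := by
  simp [opL, PsiNine, ite_and, mul_ite, mul_zero]

lemma sqrt_third : Real.sqrt (1/3) = 1 / Real.sqrt 3 := by
  rw [show (1/3:ℝ) = 3⁻¹ by norm_num, Real.sqrt_inv, one_div]

lemma key2 (v : EuclideanSpace ℂ (Fin 2 × Fin 2)) (i j : Fin 11) :
    M0Bdiag j * lift2 v (i, j) = ((1 / Real.sqrt 3 : ℝ) : ℂ) * lift2 v (i, j) := by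
  by_cases h : (i : ℕ) < 2 ∧ (j : ℕ) < 2
  · simp only [M0Bdiag, if_pos h.2, sqrt_third]
  · simp only [lift2, WithLp.ofLp_toLp, dif_neg h, mul_zero]

lemma h33 : ((1 / Real.sqrt 3 : ℝ) : ℂ) * ((1 / Real.sqrt 3 : ℝ) : ℂ) = ((1/3 : ℝ) : ℂ) := by
  rw [← Complex.ofReal_mul]
  congr 1
  rw [div_mul_div_comm, one_mul, Real.mul_self_sqrt (by norm_num)]

lemma key9 (U : Matrix (Fin 9) (Fin 9) ℂ) (i j : Fin 11) :
    M0Bdiag j * lift9 (opL U (PhiME 9)) (i, j)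
      = ((1 / Real.sqrt 3 : ℝ) : ℂ) * lift9 (opL U PsiNine) (i, j) := by
  by_cases h : 2 ≤ (i : ℕ) ∧ 2 ≤ (j : ℕ)
  · simp only [lift9, dif_pos h, opL_Phi, opL_Psi, M0Bdiag]
    have h2 : ¬ ((j:ℕ) < 2) := by omega
    rw [if_neg h2]
    have h9 : Real.sqrt ((9:ℕ):ℝ) = 3 := by
      rw [show ((9:ℕ):ℝ) = 3^2 by norm_num, Real.sqrt_sq (by norm_num)]
    by_cases h5 : (j : ℕ) < 5
    · rw [if_pos h5, if_pos (by omega : (j:ℕ) - 2 < 3), h9,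
        show (((1/3:ℝ)):ℂ) = ((1 / Real.sqrt 3 : ℝ) : ℂ) * ((1 / Real.sqrt 3 : ℝ) : ℂ) from h33.symm]
      ring
    · rw [if_neg h5, if_neg (by omega : ¬ ((j:ℕ) - 2 < 3))]
      ring
  · simp [lift9, h]

lemma key9' (i j : Fin 11) :
    M0Bdiag j * lift9 (PhiME 9) (i, j)
      = ((1 / Real.sqrt 3 : ℝ) : ℂ) * lift9 PsiNine (i, j) := by
  have := key9 1 i j
  rwa [opL_one, opL_one] at this

lemma famkey (γ₁ γ₂ : ℂ) (l : Fin 3) (i j : Fin 11) :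
    M0Bdiag j * psiFam γ₁ γ₂ l (i, j)
      = ((1 / Real.sqrt 3 : ℝ) : ℂ) * psiFam0 γ₁ γ₂ l (i, j) := by
  fin_cases l <;>
    simp only [psiFam, psiFam0, Fin.zero_eta, Fin.mk_one, Fin.reduceFinMk, Matrix.cons_val_zero, Matrix.cons_val_one, Matrix.head_cons,
      Matrix.cons_val_two, Matrix.tail_cons, PiLp.add_apply, PiLp.smul_apply, smul_eq_mul]
  · linear_combination ((Real.sqrt (2/11) : ℝ) : ℂ) * key2 (PhiME 2) i j
      + ((Real.sqrt (9/11) : ℝ) : ℂ) * key9' i j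
  · linear_combination ((Real.sqrt (2/11) : ℝ) : ℂ) * γ₁ * key2 (opL (Xmat 2) (PhiME 2)) i j
      + ((Real.sqrt (9/11) : ℝ) : ℂ) * key9 (Xmat 9 ^ 3) i j
  · linear_combination ((Real.sqrt (2/11) : ℝ) : ℂ) * γ₂ * key2 (opL (Zmat 2) (PhiME 2)) i j
      + ((Real.sqrt (9/11) : ℝ) : ℂ) * key9 (Xmat 9 ^ 6) i j

lemma step1 (γ₁ γ₂ : ℂ) :
    applyM0B (totalState (psiFam γ₁ γ₂))
      = ((1 / Real.sqrt 3 : ℝ) : ℂ) • totalState (psiFam0 γ₁ γ₂) := by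
  ext p
  obtain ⟨l, i, j⟩ := p
  show M0Bdiag j * (((1 / Real.sqrt 3 : ℝ) : ℂ) * psiFam γ₁ γ₂ l (i, j))
      = ((1 / Real.sqrt 3 : ℝ) : ℂ) * (((1 / Real.sqrt 3 : ℝ) : ℂ) * psiFam0 γ₁ γ₂ l (i, j))
  rw [mul_left_comm, famkey]

lemma normsq_eq {ι : Type*} [Fintype ι] (x : EuclideanSpace ℂ ι) :
    ‖x‖ ^ 2 = ∑ i, ‖x i‖ ^ 2 := by
  rw [EuclideanSpace.norm_eq, Real.sq_sqrt (by positivity)]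

lemma sum_eleven (f : Fin 11 → ℝ) :
    ∑ i, f i = (∑ a : Fin 2, f ⟨(a : ℕ), by omega⟩)
        + ∑ a : Fin 9, f ⟨2 + (a : ℕ), by omega⟩ := by
  rw [← (Fintype.sum_equiv finSumFinEquiv
      (fun x : Fin 2 ⊕ Fin 9 => f (finSumFinEquiv x)) f (fun x => rfl)),
    Fintype.sum_sum_type]
  congr 1


lemma normsq_lift2 (v : EuclideanSpace ℂ (Fin 2 × Fin 2)) :
    ∑ p : Fin 11 × Fin 11, ‖lift2 v p‖ ^ 2 = ∑ q : Fin 2 × Fin 2, ‖v q‖ ^ 2 := by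
  rw [Fintype.sum_prod_type, Fintype.sum_prod_type, sum_eleven]
  have e1 : ∀ a : Fin 2, ∑ j : Fin 11, ‖lift2 v (⟨(a:ℕ), by omega⟩, j)‖ ^ 2
      = ∑ b : Fin 2, ‖v (a, b)‖ ^ 2 := by
    intro a
    rw [sum_eleven]
    have : ∀ b : Fin 9, lift2 v (⟨(a:ℕ), by omega⟩, ⟨2 + (b:ℕ), by omega⟩) = 0 := by
      intro b; rw [lift2, WithLp.ofLp_toLp, dif_neg (by simp; omega)]
    simp only [this]
    simp [lift2, Fin.eta, Fin.is_le]
  have e2 : ∀ a : Fin 9, ∑ j : Fin 11, ‖lift2 v (⟨2 + (a:ℕ), by omega⟩, j)‖ ^ 2 = 0 := by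
    intro a
    have : ∀ j : Fin 11, lift2 v (⟨2 + (a:ℕ), by omega⟩, j) = 0 := by
      intro j; rw [lift2, WithLp.ofLp_toLp, dif_neg (by simp; omega)]
    simp [this]
  simp only [e1, e2]
  simp

lemma normsq_lift9 (v : EuclideanSpace ℂ (Fin 9 × Fin 9)) :
    ∑ p : Fin 11 × Fin 11, ‖lift9 v p‖ ^ 2 = ∑ q : Fin 9 × Fin 9, ‖v q‖ ^ 2 := by
  rw [Fintype.sum_prod_type, Fintype.sum_prod_type, sum_eleven]
  have e1 : ∀ a : Fin 2, ∑ j : Fin 11, ‖lift9 v (⟨(a:ℕ), by omega⟩, j)‖ ^ 2 = 0 := by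
    intro a
    have : ∀ j : Fin 11, lift9 v (⟨(a:ℕ), by omega⟩, j) = 0 := by
      intro j; rw [lift9, WithLp.ofLp_toLp, dif_neg (by simp [Nat.not_le.mpr a.isLt])]
    simp [this]
  have e2 : ∀ a : Fin 9, ∑ j : Fin 11, ‖lift9 v (⟨2 + (a:ℕ), by omega⟩, j)‖ ^ 2
      = ∑ b : Fin 9, ‖v (a, b)‖ ^ 2 := by
    intro a
    rw [sum_eleven]
    have z1 : ∀ b : Fin 2, lift9 v (⟨2 + (a:ℕ), by omega⟩, ⟨(b:ℕ), by omega⟩) = 0 := by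
      intro b; rw [lift9, WithLp.ofLp_toLp, dif_neg (by simp [Nat.not_le.mpr b.isLt])]
    have z2 : ∀ b : Fin 9, lift9 v (⟨2 + (a:ℕ), by omega⟩, ⟨2 + (b:ℕ), by omega⟩) = v (a, b) := by
      intro b
      rw [lift9, WithLp.ofLp_toLp, dif_pos (by constructor <;> simp)]
      refine congrArg v.ofLp ?_
      exact Prod.ext (Fin.ext (by simp)) (Fin.ext (by simp))
    simp only [z1, z2]
    simp
  simp only [e1, e2]
  simp

lemma normsq_add_disjoint {ι : Type*} [Fintype ι] (x y : EuclideanSpace ℂ ι)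
    (h : ∀ p, x p = 0 ∨ y p = 0) :
    ∑ p, ‖(x + y) p‖ ^ 2 = (∑ p, ‖x p‖ ^ 2) + ∑ p, ‖y p‖ ^ 2 := by
  rw [← Finset.sum_add_distrib]
  refine Finset.sum_congr rfl fun p _ => ?_
  rcases h p with hp | hp <;> simp [PiLp.add_apply, hp]

lemma norm_c3 : ‖((1 / Real.sqrt 3 : ℝ) : ℂ)‖ ^ 2 = 1 / 3 := by
  rw [Complex.norm_real, Real.norm_eq_abs, _root_.abs_of_nonneg (by positivity), div_pow, one_pow,
    Real.sq_sqrt (by norm_num)]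

lemma normsq_PhiME (k : ℕ) (hk : 0 < k) :
    ∑ q : Fin k × Fin k, ‖PhiME k q‖ ^ 2 = 1 := by
  have : ∀ q : Fin k × Fin k, ‖PhiME k q‖ ^ 2 = if q.1 = q.2 then 1 / (k : ℝ) else 0 := by
    intro q
    rw [PhiME, WithLp.ofLp_toLp]
    split_ifs
    · rw [Complex.norm_real, Real.norm_eq_abs, _root_.abs_of_nonneg (by positivity), div_pow, one_pow,
        Real.sq_sqrt (by positivity)]
    · simp
  simp only [this]
  rw [Fintype.sum_prod_type]
  simp [Finset.sum_ite_eq, mul_one_div]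
  field_simp

lemma Xmat_pow (k : ℕ) (hk : 0 < k) (m : ℕ) (i j : Fin k) :
    (Xmat k ^ m) i j = if (i : ℕ) = ((j : ℕ) + m) % k then 1 else 0 := by
  induction m generalizing j with
  | zero => simp [Matrix.one_apply, Nat.mod_eq_of_lt j.isLt, Fin.ext_iff]
  | succ m ih =>
    rw [pow_succ, Matrix.mul_apply]
    have hx : ∀ i' : Fin k, Xmat k i' j
        = if i' = (⟨((j : ℕ) + 1) % k, Nat.mod_lt _ hk⟩ : Fin k) then 1 else 0 := by
      intro i'; rw [Xmat]; simp [Fin.ext_iff]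
    simp only [hx, mul_ite, mul_one, mul_zero, Finset.sum_ite_eq', Finset.mem_univ, if_true]
    rw [ih]
    have hmod : (((j:ℕ)+1) % k + m) % k = ((j:ℕ) + (m+1)) % k := by
      rw [Nat.mod_add_mod]; congr 1; omega
    simp only [Fin.val_mk, hmod]

lemma normsq_ofReal (r : ℝ) : ‖((r : ℝ) : ℂ)‖ ^ 2 = r ^ 2 := by
  rw [Complex.norm_real, Real.norm_eq_abs, _root_.sq_abs]

lemma normsq_PsiNine : ∑ q : Fin 9 × Fin 9, ‖PsiNine q‖ ^ 2 = 1 := by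
  have hpt : ∀ q : Fin 9 × Fin 9, ‖PsiNine q‖ ^ 2
      = if q.1 = q.2 ∧ (q.1 : ℕ) < 3 then 1/3 else 0 := by
    intro q
    rw [PsiNine, WithLp.ofLp_toLp]
    split_ifs
    · rw [normsq_ofReal, div_pow, one_pow, Real.sq_sqrt (by norm_num)]
    · simp
  simp only [hpt]
  rw [Fintype.sum_prod_type]
  simp only [ite_and, Finset.sum_ite_eq, Finset.mem_univ, if_true]
  simp [Fin.sum_univ_succ]
  try norm_num

lemma normsq_opL_X9 (m : ℕ) :
    ∑ q : Fin 9 × Fin 9, ‖opL (Xmat 9 ^ m) PsiNine q‖ ^ 2 = 1 := by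
  have hpt : ∀ a b : Fin 9, ‖opL (Xmat 9 ^ m) PsiNine (a, b)‖ ^ 2
      = if a = (⟨((b : ℕ) + m) % 9, Nat.mod_lt _ (by norm_num)⟩ : Fin 9) ∧ (b : ℕ) < 3
        then 1/3 else 0 := by
    intro a b
    rw [opL_Psi, Xmat_pow 9 (by norm_num)]
    by_cases hb : (b : ℕ) < 3
    · rw [if_pos hb]
      by_cases ha : (a : ℕ) = ((b : ℕ) + m) % 9
      · rw [if_pos ha, if_pos ⟨Fin.ext ha, hb⟩, one_mul, normsq_ofReal,
          div_pow, one_pow, Real.sq_sqrt (by norm_num)]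
      · rw [if_neg ha, if_neg (fun h => ha (by simpa using congrArg Fin.val h.1)),
          zero_mul, norm_zero]
        norm_num
    · rw [if_neg hb, if_neg (fun h => hb h.2), norm_zero]
      norm_num
  have hpt' : ∀ q : Fin 9 × Fin 9, ‖opL (Xmat 9 ^ m) PsiNine q‖ ^ 2
      = if q.1 = (⟨((q.2 : ℕ) + m) % 9, Nat.mod_lt _ (by norm_num)⟩ : Fin 9) ∧ (q.2 : ℕ) < 3
        then 1/3 else 0 := fun q => hpt q.1 q.2
  rw [Fintype.sum_prod_type_right]
  simp only [hpt]
  simp only [ite_and, Finset.sum_ite_eq', Finset.mem_univ, if_true]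
  simp [Fin.sum_univ_succ]
  try norm_num

lemma normsq_opL_X2 : ∑ q : Fin 2 × Fin 2, ‖opL (Xmat 2) (PhiME 2) q‖ ^ 2 = 1 := by
  have hpt : ∀ a b : Fin 2, ‖opL (Xmat 2) (PhiME 2) (a, b)‖ ^ 2
      = if (a : ℕ) = ((b : ℕ) + 1) % 2 then 1/2 else 0 := by
    intro a b
    rw [opL_Phi]
    by_cases h : (a : ℕ) = ((b : ℕ) + 1) % 2
    · rw [Xmat]
      rw [if_pos h, if_pos h, one_mul, normsq_ofReal, div_pow, one_pow,
        Real.sq_sqrt (by norm_num)]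
      norm_num
    · rw [Xmat]
      rw [if_neg h, if_neg h, zero_mul, norm_zero]
      norm_num
  have hpt' : ∀ q : Fin 2 × Fin 2, ‖opL (Xmat 2) (PhiME 2) q‖ ^ 2
      = if (q.1 : ℕ) = ((q.2 : ℕ) + 1) % 2 then 1/2 else 0 := fun q => hpt q.1 q.2
  simp only [hpt']
  rw [Fintype.sum_prod_type]
  simp [Fin.sum_univ_succ]
  try norm_num

lemma norm_exp_unit (l k : ℕ) : ‖Complex.exp (2 * Real.pi * Complex.I * l / k)‖ = 1 := by
  have h : (2 * Real.pi * Complex.I * l / k) = ((2 * Real.pi * l / k : ℝ) : ℂ) * Complex.I := by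
    push_cast; ring
  rw [h, Complex.norm_exp_ofReal_mul_I]

lemma normsq_opL_Z2 : ∑ q : Fin 2 × Fin 2, ‖opL (Zmat 2) (PhiME 2) q‖ ^ 2 = 1 := by
  have hpt : ∀ a b : Fin 2, ‖opL (Zmat 2) (PhiME 2) (a, b)‖ ^ 2
      = if a = b then 1/2 else 0 := by
    intro a b
    rw [opL_Phi, Zmat]
    by_cases h : a = b
    · subst h
      rw [Matrix.diagonal_apply_eq, if_pos rfl, norm_mul, mul_pow, norm_exp_unit,
        one_pow, one_mul, normsq_ofReal, div_pow, one_pow, Real.sq_sqrt (by norm_num)]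
      norm_num
    · rw [Matrix.diagonal_apply_ne _ h, if_neg h, zero_mul, norm_zero]
      norm_num
  have hpt' : ∀ q : Fin 2 × Fin 2, ‖opL (Zmat 2) (PhiME 2) q‖ ^ 2
      = if q.1 = q.2 then 1/2 else 0 := fun q => hpt q.1 q.2
  simp only [hpt']
  rw [Fintype.sum_prod_type]
  simp [Fin.sum_univ_succ]
  try norm_num

lemma lifts_disjoint (u : EuclideanSpace ℂ (Fin 2 × Fin 2)) (w : EuclideanSpace ℂ (Fin 9 × Fin 9))
    (c2 c9 : ℂ) : ∀ p, (c2 • lift2 u) p = 0 ∨ (c9 • lift9 w) p = 0 := by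
  intro p
  by_cases h : (p.1 : ℕ) < 2
  · right
    rw [PiLp.smul_apply, lift9, WithLp.ofLp_toLp, dif_neg (by omega), smul_zero]
  · left
    rw [PiLp.smul_apply, lift2, WithLp.ofLp_toLp, dif_neg (by tauto), smul_zero]

lemma normsq_smul {ι : Type*} [Fintype ι] (c : ℂ) (v : EuclideanSpace ℂ ι) :
    ∑ p, ‖(c • v) p‖ ^ 2 = ‖c‖ ^ 2 * ∑ p, ‖v p‖ ^ 2 := by
  rw [Finset.mul_sum]
  exact Finset.sum_congr rfl fun p _ => by
    rw [PiLp.smul_apply, smul_eq_mul, norm_mul, mul_pow]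

lemma smul_lift2 (γ : ℂ) (u : EuclideanSpace ℂ (Fin 2 × Fin 2)) :
    γ • lift2 u = lift2 (γ • u) := by
  ext p
  simp only [PiLp.smul_apply, lift2, WithLp.ofLp_toLp]
  by_cases h : (p.1 : ℕ) < 2 ∧ (p.2 : ℕ) < 2
  · rw [dif_pos h, dif_pos h]
  · rw [dif_neg h, dif_neg h, smul_zero]

lemma norm_combo (u : EuclideanSpace ℂ (Fin 2 × Fin 2)) (w : EuclideanSpace ℂ (Fin 9 × Fin 9))
    (hu : ∑ q, ‖u q‖ ^ 2 = 1) (hw : ∑ q, ‖w q‖ ^ 2 = 1) :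
    ‖(Real.sqrt (2/11) : ℂ) • lift2 u + (Real.sqrt (9/11) : ℂ) • lift9 w‖ = 1 := by
  have hsq : ‖(Real.sqrt (2/11) : ℂ) • lift2 u + (Real.sqrt (9/11) : ℂ) • lift9 w‖ ^ 2 = 1 := by
    rw [normsq_eq, normsq_add_disjoint _ _ (lifts_disjoint u w _ _),
      normsq_smul, normsq_smul, normsq_lift2, normsq_lift9, hu, hw,
      normsq_ofReal, normsq_ofReal, Real.sq_sqrt (by norm_num), Real.sq_sqrt (by norm_num)]
    norm_num
  nlinarith [norm_nonneg ((Real.sqrt (2/11) : ℂ) • lift2 u + (Real.sqrt (9/11) : ℂ) • lift9 w)]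

lemma norm_psiFam0 (γ₁ γ₂ : ℂ) (h₁ : ‖γ₁‖ = 1) (h₂ : ‖γ₂‖ = 1) (l : Fin 3) :
    ‖psiFam0 γ₁ γ₂ l‖ = 1 := by
  fin_cases l <;>
    simp only [psiFam0, Fin.zero_eta, Fin.mk_one, Fin.reduceFinMk, Matrix.cons_val_zero,
      Matrix.cons_val_one, Matrix.head_cons, Matrix.cons_val_two, Matrix.tail_cons]
  · exact norm_combo _ _ (normsq_PhiME 2 (by norm_num)) normsq_PsiNine
  · rw [smul_lift2]
    refine norm_combo _ _ ?_ (normsq_opL_X9 3)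
    rw [normsq_smul, h₁, one_pow, one_mul]
    exact normsq_opL_X2
  · rw [smul_lift2]
    refine norm_combo _ _ ?_ (normsq_opL_X9 6)
    rw [normsq_smul, h₂, one_pow, one_mul]
    exact normsq_opL_Z2

lemma norm_total (χ : Fin 3 → EuclideanSpace ℂ (Fin 11 × Fin 11)) (h : ∀ l, ‖χ l‖ = 1) :
    ‖totalState χ‖ = 1 := by
  have hsq : ‖totalState χ‖ ^ 2 = 1 := by
    rw [normsq_eq, Fintype.sum_prod_type]
    have key : ∀ l : Fin 3, ∑ p : Fin 11 × Fin 11, ‖totalState χ (l, p)‖ ^ 2 = 1/3 := by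
      intro l
      have hp : ∀ p : Fin 11 × Fin 11, ‖totalState χ (l, p)‖ ^ 2
          = ‖((1/Real.sqrt 3 : ℝ) : ℂ)‖ ^ 2 * ‖χ l p‖ ^ 2 := by
        intro p; rw [totalState, WithLp.ofLp_toLp, norm_mul, mul_pow]
      simp only [hp]
      rw [← Finset.mul_sum, ← normsq_eq, h l, norm_c3]
      norm_num
    simp only [key]
    norm_num [Fin.sum_univ_succ]
  nlinarith [norm_nonneg (totalState χ)]

/-- Applying `I ⊗ I ⊗ M_0^B` to `|ψ⟩ = (1/√3)∑_l |l⟩⊗|ψ_l⟩` and renormalizing yields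
`(1/√3)∑_l |l⟩⊗|ψ_l^{(0)}⟩`. -/
theorem post_measurement_state (γ₁ γ₂ : ℂ) (h₁ : ‖γ₁‖ = 1) (h₂ : ‖γ₂‖ = 1) :
    ((1 / ‖applyM0B (totalState (psiFam γ₁ γ₂))‖ : ℝ) : ℂ) •
        applyM0B (totalState (psiFam γ₁ γ₂))
      = totalState (psiFam0 γ₁ γ₂) := by
  have hn : ‖totalState (psiFam0 γ₁ γ₂)‖ = 1 := norm_total _ (norm_psiFam0 γ₁ γ₂ h₁ h₂)
  have hc : ‖((1/Real.sqrt 3 : ℝ) : ℂ)‖ = 1/Real.sqrt 3 := by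
    rw [Complex.norm_real, Real.norm_eq_abs, _root_.abs_of_nonneg (by positivity)]
  rw [step1, norm_smul, hn, mul_one, hc, smul_smul]
  have hs : ((1/(1/Real.sqrt 3) : ℝ) : ℂ) * ((1/Real.sqrt 3 : ℝ) : ℂ) = 1 := by
    rw [← Complex.ofReal_mul]
    have h3 : Real.sqrt 3 ≠ 0 := by positivity
    field_simp
    norm_num
  rw [hs, one_smul]
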